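/- The subgroup of GL(3,ℝ) generated by the matrices τ₁, δ and ρ is isomorphic to the symmetric group S₄ (the group of permutations of a four-element set). -/

import Mathlib

open Matrix

/-- The matrix representing the automorphism δ of `V_{L₂}`. -/
noncomputable def δ : GL (Fin 3) ℝ :=
  Matrix.GeneralLinearGroup.mkOfDetNeZero !![0,1,0; 0,0,-1; -1,0,0]
    (by norm_num [Matrix.det_fin_three, Matrix.cons_val_two])

/-- The matrix representing the automorphism τ₁ of `V_{L₂}`. -/
noncomputable def τ₁ : GL (Fin 3) ℝ :=
  Matrix.GeneralLinearGroup.mkOfDetNeZero !![1,0,0; 0,-1,0; 0,0,-1]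
    (by norm_num [Matrix.det_fin_three, Matrix.cons_val_two])

/-- The matrix representing the automorphism ρ of `V_{L₂}`. -/
noncomputable def ρ : GL (Fin 3) ℝ :=
  Matrix.GeneralLinearGroup.mkOfDetNeZero !![-1,0,0; 0,0,1; 0,1,0]
    (by norm_num [Matrix.det_fin_three, Matrix.cons_val_two])

/-- Vertices of a regular tetrahedron inscribed in the cube (the four diagonals). -/
def v4 : Fin 4 → Fin 3 → ℤ
  | 0 => ![1,1,1]
  | 1 => ![1,-1,-1]
  | 2 => ![-1,1,-1]
  | 3 => ![-1,-1,1]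

/-- The standard 3-dimensional representation of `S₄` (as rotations of the cube),
as a bare function into integer matrices. -/
def F (σ : Equiv.Perm (Fin 4)) : Matrix (Fin 3) (Fin 3) ℤ :=
  (Equiv.Perm.sign σ : ℤ) • Matrix.of fun i j => (v4 (σ j.succ) i + v4 (σ 0) i) / 2

set_option maxHeartbeats 1000000 in
lemma F_mul : ∀ σ τ : Equiv.Perm (Fin 4), F (σ * τ) = F σ * F τ := by decide

def Fhom : Equiv.Perm (Fin 4) →* Matrix (Fin 3) (Fin 3) ℤ where
  toFun := F
  map_one' := by decide
  map_mul' := F_mul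

/-- The representation landing in `GL (Fin 3) ℝ`. -/
noncomputable def Φ : Equiv.Perm (Fin 4) →* GL (Fin 3) ℝ :=
  (((Int.castRingHom ℝ).mapMatrix.toMonoidHom.comp Fhom)).toHomUnits

lemma Φ_coe (σ : Equiv.Perm (Fin 4)) :
    (↑(Φ σ) : Matrix (Fin 3) (Fin 3) ℝ) = (F σ).map (Int.cast : ℤ → ℝ) := rfl

lemma Φ_injective : Function.Injective Φ := by
  have key : ∀ σ : Equiv.Perm (Fin 4), F σ = 1 → σ = 1 := by decide
  rw [injective_iff_map_eq_one]
  intro σ h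
  apply key
  have h2 : (F σ).map (Int.cast : ℤ → ℝ) = (1 : Matrix (Fin 3) (Fin 3) ℝ) := by
    rw [← Φ_coe, h]; rfl
  rw [← Matrix.map_one (Int.cast : ℤ → ℝ) (by simp) (by simp)] at h2
  ext i j
  have := congrFun (congrFun h2 i) j
  simp only [Matrix.map_apply] at this
  exact_mod_cast this

def p1 : Equiv.Perm (Fin 4) := Equiv.swap 0 1 * Equiv.swap 2 3
def p2 : Equiv.Perm (Fin 4) := Equiv.swap 0 1 * Equiv.swap 1 2
def p3 : Equiv.Perm (Fin 4) := Equiv.swap 0 1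

lemma F_p1 : F p1 = !![1,0,0; 0,-1,0; 0,0,-1] := by decide
lemma F_p2 : F p2 = !![0,1,0; 0,0,-1; -1,0,0] := by decide
lemma F_p3 : F p3 = !![-1,0,0; 0,0,1; 0,1,0] := by decide

lemma Φ_p1 : Φ p1 = τ₁ := by
  apply Units.ext
  rw [Φ_coe, F_p1]
  show _ = !![1,0,0; 0,-1,0; 0,0,-1]
  ext i j
  fin_cases i <;> fin_cases j <;> norm_num [Matrix.map_apply]

lemma Φ_p2 : Φ p2 = δ := by
  apply Units.ext
  rw [Φ_coe, F_p2]
  show _ = !![0,1,0; 0,0,-1; -1,0,0]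
  ext i j
  fin_cases i <;> fin_cases j <;> norm_num [Matrix.map_apply]

lemma Φ_p3 : Φ p3 = ρ := by
  apply Units.ext
  rw [Φ_coe, F_p3]
  show _ = !![-1,0,0; 0,0,1; 0,1,0]
  ext i j
  fin_cases i <;> fin_cases j <;> norm_num [Matrix.map_apply]

lemma closure_p_top : Subgroup.closure {p1, p2, p3} = ⊤ := by
  rw [eq_top_iff, ← Equiv.Perm.closure_isSwap, Subgroup.closure_le]
  set G := Subgroup.closure {p1, p2, p3} with hG
  have h1 : p1 ∈ G := Subgroup.subset_closure (by simp)
  have h2 : p2 ∈ G := Subgroup.subset_closure (by simp)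
  have h3 : p3 ∈ G := Subgroup.subset_closure (by simp)
  have s01 : Equiv.swap (0:Fin 4) 1 ∈ G := h3
  have s23 : Equiv.swap (2:Fin 4) 3 ∈ G := by
    have : Equiv.swap (2:Fin 4) 3 = p3 * p1 := by decide
    rw [this]; exact mul_mem h3 h1
  have s12 : Equiv.swap (1:Fin 4) 2 ∈ G := by
    have : Equiv.swap (1:Fin 4) 2 = p3 * p2 := by decide
    rw [this]; exact mul_mem h3 h2
  have s02 : Equiv.swap (0:Fin 4) 2 ∈ G := by
    have : Equiv.swap (0:Fin 4) 2 = p2 * p3 := by decide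
    rw [this]; exact mul_mem h2 h3
  have s13 : Equiv.swap (1:Fin 4) 3 ∈ G := by
    have : Equiv.swap (1:Fin 4) 3 = Equiv.swap 2 3 * Equiv.swap 1 2 * Equiv.swap 2 3 := by decide
    rw [this]; exact mul_mem (mul_mem s23 s12) s23
  have s03 : Equiv.swap (0:Fin 4) 3 ∈ G := by
    have : Equiv.swap (0:Fin 4) 3 = Equiv.swap 2 3 * Equiv.swap 0 2 * Equiv.swap 2 3 := by decide
    rw [this]; exact mul_mem (mul_mem s23 s02) s23
  rintro x ⟨a, b, hab, rfl⟩
  fin_cases a <;> fin_cases b <;>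
    first
      | exact absurd rfl hab
      | assumption
      | (rw [Equiv.swap_comm]; assumption)

lemma Φ_range : Φ.range = Subgroup.closure {τ₁, δ, ρ} := by
  rw [MonoidHom.range_eq_map, ← closure_p_top, MonoidHom.map_closure]
  congr 1
  simp [Set.image_insert_eq, Φ_p1, Φ_p2, Φ_p3]

/-- The subgroup of GL(3,ℝ) generated by τ₁, δ and ρ is isomorphic to the
symmetric group S₄. -/
theorem subgroup_closure_tau1_delta_rho_iso_S4 :
    Nonempty ((Subgroup.closure {τ₁, δ, ρ} : Subgroup (GL (Fin 3) ℝ)) ≃* Equiv.Perm (Fin 4)) := by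
  exact ⟨(MulEquiv.subgroupCongr Φ_range.symm).trans (MonoidHom.ofInjective Φ_injective).symm⟩
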